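/- Let c=(2π−4)/(3π−2). There is an absolute constant C such that for all real numbers E ≥ 0 and F ≥ 0, ∫_{−1/2}^{1/2} (1 + c·E·cos²(πθ) + c·F)·e^{−c·E·cos²(πθ) − c·F} dθ ≤ C·(1+F)·e^{−c·F}/√(1+E). -/

import Mathlib

set_option maxHeartbeats 1000000

open Real

private lemma aux_pointwise {x : ℝ} (hx : 0 ≤ x) :
    (1 + x) * Real.exp (-x) ≤ 2 / (1 + x / 2) := by
  have h1 : 1 + x / 2 ≤ Real.exp (x / 2) := by
    have := Real.add_one_le_exp (x / 2); linarith
  have hp : (0:ℝ) < 1 + x / 2 := by linarith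
  rw [le_div_iff₀ hp]
  have he : Real.exp (-x) * Real.exp (x / 2) * Real.exp (x / 2) = 1 := by
    rw [← Real.exp_add, ← Real.exp_add]
    have h0 : -x + x / 2 + x / 2 = 0 := by ring
    rw [h0, Real.exp_zero]
  have h2 : 1 + x ≤ 2 * Real.exp (x / 2) := by nlinarith
  calc (1 + x) * Real.exp (-x) * (1 + x / 2)
      ≤ 2 * Real.exp (x / 2) * Real.exp (-x) * Real.exp (x / 2) := by
        apply mul_le_mul _ h1 (by linarith) (by positivity)
        exact mul_le_mul_of_nonneg_right h2 (Real.exp_pos _).le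
    _ = 2 * (Real.exp (-x) * Real.exp (x / 2) * Real.exp (x / 2)) := by ring
    _ = 2 := by rw [he, mul_one]

private lemma key_int {b : ℝ} (hb : 0 < b) :
    ∫ θ in (0:ℝ)..(1/2), 1 / (1 + b * Real.cos (π * θ) ^ 2) ≤ π / (4 * Real.sqrt b) := by
  have hsb : 0 < Real.sqrt b := Real.sqrt_pos.2 hb
  have step1 : (∫ θ in (0:ℝ)..(1/2), 1 / (1 + b * Real.cos (π * θ) ^ 2))
      ≤ ∫ θ in (0:ℝ)..(1/2), 1 / (1 + b * (1 - 2 * θ) ^ 2) := by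
    apply intervalIntegral.integral_mono_on (by norm_num)
    · exact (continuous_const.div (by fun_prop) (fun θ => by positivity)).intervalIntegrable _ _
    · exact (continuous_const.div (by fun_prop) (fun θ => by positivity)).intervalIntegrable _ _
    · intro θ hθ
      obtain ⟨h0, h1⟩ := hθ
      have hπ := Real.pi_pos
      have hcos : 1 - 2 * θ ≤ Real.cos (π * θ) := by
        have h2 := Real.one_sub_mul_le_cos (x := π * θ) (by positivity) (by nlinarith)
        have hπq : (2 / π) * (π * θ) = 2 * θ := by field_simp
        linarith [h2, hπq.le, hπq.ge]
      have h1' : (0:ℝ) ≤ 1 - 2 * θ := by linarith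
      have hsq : (1 - 2 * θ) ^ 2 ≤ Real.cos (π * θ) ^ 2 := by nlinarith
      exact one_div_le_one_div_of_le (by positivity) (by nlinarith)
  have step2 : (∫ θ in (0:ℝ)..(1/2), 1 / (1 + b * (1 - 2 * θ) ^ 2))
      = (1/2) * ∫ u in (0:ℝ)..1, 1 / (1 + b * u ^ 2) := by
    have h := intervalIntegral.integral_comp_sub_mul (a := 0) (b := 1/2)
      (fun u => 1 / (1 + b * u ^ 2)) two_ne_zero 1
    norm_num at h
    simpa [one_div] using h
  have step3 : (∫ u in (0:ℝ)..1, 1 / (1 + b * u ^ 2))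
      = (Real.sqrt b)⁻¹ * Real.arctan (Real.sqrt b) := by
    have h1 : (∫ u in (0:ℝ)..1, 1 / (1 + b * u ^ 2))
        = ∫ u in (0:ℝ)..1, 1 / (1 + (Real.sqrt b * u) ^ 2) := by
      congr 1; ext u; rw [mul_pow, Real.sq_sqrt hb.le]
    rw [h1, intervalIntegral.integral_comp_mul_left (fun v => 1 / (1 + v ^ 2)) hsb.ne',
      mul_zero, mul_one, integral_one_div_one_add_sq, Real.arctan_zero, sub_zero, smul_eq_mul]
  have harct : Real.arctan (Real.sqrt b) ≤ π / 2 := (Real.arctan_lt_pi_div_two _).le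
  calc (∫ θ in (0:ℝ)..(1/2), 1 / (1 + b * Real.cos (π * θ) ^ 2))
      ≤ (1/2) * ((Real.sqrt b)⁻¹ * Real.arctan (Real.sqrt b)) := by
        rw [← step3, ← step2]; exact step1
    _ ≤ (1/2) * ((Real.sqrt b)⁻¹ * (π / 2)) := by
        have h := mul_le_mul_of_nonneg_left harct (inv_nonneg.2 (Real.sqrt_nonneg b))
        linarith
    _ = π / (4 * Real.sqrt b) := by
        rw [eq_div_iff (by positivity)]
        field_simp
        norm_num

private lemma even_int (h : ℝ → ℝ) (heven : ∀ x, h (-x) = h x) (hcont : Continuous h) :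
    ∫ θ in (-(1/2):ℝ)..(1/2), h θ = 2 * ∫ θ in (0:ℝ)..(1/2), h θ := by
  have h1 : (∫ θ in (-(1/2):ℝ)..0, h θ) = ∫ θ in (0:ℝ)..(1/2), h θ := by
    have := intervalIntegral.integral_comp_neg (a := (0:ℝ)) (b := 1/2) h
    simp only [heven, neg_zero] at this
    exact this.symm
  have h2 := intervalIntegral.integral_add_adjacent_intervals
    (hcont.intervalIntegrable (-(1/2)) 0) (hcont.intervalIntegrable 0 (1/2)) (μ := MeasureTheory.volume)
  rw [← h2, h1]; ring

theorem statement6 :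
    ∃ C : ℝ, ∀ E F : ℝ, 0 ≤ E → 0 ≤ F →
      (∫ θ in (-(1 / 2) : ℝ)..(1 / 2),
          (1 + ((2 * π - 4) / (3 * π - 2)) * E * Real.cos (π * θ) ^ 2 +
              ((2 * π - 4) / (3 * π - 2)) * F) *
            Real.exp (-(((2 * π - 4) / (3 * π - 2)) * E * Real.cos (π * θ) ^ 2) -
              ((2 * π - 4) / (3 * π - 2)) * F)) ≤
        C * (1 + F) * Real.exp (-((2 * π - 4) / (3 * π - 2)) * F) /
          Real.sqrt (1 + E) := by
  use 30
  intro E F hE hF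
  have hπ3 := Real.pi_gt_three
  have hπ4 := Real.pi_lt_d2
  set c : ℝ := (2 * π - 4) / (3 * π - 2) with hc_def
  have hden : (0:ℝ) < 3 * π - 2 := by linarith
  have hc_pos : 0 < c := by rw [hc_def]; exact div_pos (by linarith) hden
  have hc1 : c ≤ 1 := by rw [hc_def, div_le_one hden]; linarith
  have hc_lb : 1/4 ≤ c := by rw [hc_def, le_div_iff₀ hden]; linarith
  set b : ℝ := c * E / 2 with hb_def
  have hb0 : 0 ≤ b := by positivity
  set K : ℝ := (1 + F) * Real.exp (-(c * F)) with hK_def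
  have hK0 : 0 ≤ K := by positivity
  -- pointwise bound
  have key : ∀ θ : ℝ,
      (1 + c * E * Real.cos (π * θ) ^ 2 + c * F) *
        Real.exp (-(c * E * Real.cos (π * θ) ^ 2) - c * F)
      ≤ K * (2 / (1 + b * Real.cos (π * θ) ^ 2)) := by
    intro θ
    set a : ℝ := c * E * Real.cos (π * θ) ^ 2 with ha_def
    have ha : 0 ≤ a := by positivity
    have hcf : 0 ≤ c * F := by positivity
    have hexp : Real.exp (-a - c * F) = Real.exp (-a) * Real.exp (-(c * F)) := by
      rw [← Real.exp_add]; ring_nf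
    have A1 : (1 + a) * Real.exp (-a) ≤ 2 / (1 + a / 2) := aux_pointwise ha
    have hba : b * Real.cos (π * θ) ^ 2 = a / 2 := by rw [ha_def, hb_def]; ring
    rw [hexp, hba]
    calc (1 + a + c * F) * (Real.exp (-a) * Real.exp (-(c * F)))
        ≤ ((1 + a) * (1 + c * F)) * (Real.exp (-a) * Real.exp (-(c * F))) := by
          have : (1 + a + c * F) ≤ (1 + a) * (1 + c * F) := by nlinarith
          exact mul_le_mul_of_nonneg_right this (by positivity)
      _ = ((1 + c * F) * ((1 + a) * Real.exp (-a))) * Real.exp (-(c * F)) := by ring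
      _ ≤ ((1 + F) * (2 / (1 + a / 2))) * Real.exp (-(c * F)) := by
          have h1 : 1 + c * F ≤ 1 + F := by nlinarith
          have h2 : 0 ≤ (1 + a) * Real.exp (-a) := by positivity
          have h3 : 0 ≤ (1:ℝ) + c * F := by linarith
          exact mul_le_mul_of_nonneg_right
            (mul_le_mul h1 A1 h2 (by linarith)) (Real.exp_pos _).le
      _ = K * (2 / (1 + a / 2)) := by rw [hK_def]; ring
  -- continuity facts
  have hgcont : Continuous fun θ : ℝ => 2 / (1 + b * Real.cos (π * θ) ^ 2) :=
    continuous_const.div (by fun_prop) (fun θ => by positivity)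
  have hfcont : Continuous fun θ : ℝ =>
      (1 + c * E * Real.cos (π * θ) ^ 2 + c * F) *
        Real.exp (-(c * E * Real.cos (π * θ) ^ 2) - c * F) := by fun_prop
  -- integral bound
  have I1 : (∫ θ in (-(1/2):ℝ)..(1/2),
      (1 + c * E * Real.cos (π * θ) ^ 2 + c * F) *
        Real.exp (-(c * E * Real.cos (π * θ) ^ 2) - c * F))
      ≤ K * ∫ θ in (-(1/2):ℝ)..(1/2), 2 / (1 + b * Real.cos (π * θ) ^ 2) := by
    rw [← intervalIntegral.integral_const_mul]
    apply intervalIntegral.integral_mono_on (by norm_num)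
    · exact hfcont.intervalIntegrable _ _
    · exact (continuous_const.mul hgcont).intervalIntegrable _ _
    · exact fun θ _ => key θ
  -- evenness
  have heven : (∫ θ in (-(1/2):ℝ)..(1/2), 2 / (1 + b * Real.cos (π * θ) ^ 2))
      = 2 * ∫ θ in (0:ℝ)..(1/2), 2 / (1 + b * Real.cos (π * θ) ^ 2) := by
    apply even_int _ _ hgcont
    intro x; rw [mul_neg, Real.cos_neg]
  -- bound the trig integral
  have I2 : (∫ θ in (-(1/2):ℝ)..(1/2), 2 / (1 + b * Real.cos (π * θ) ^ 2))
      ≤ 30 / Real.sqrt (1 + E) := by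
    rw [heven]
    have hconst : ∀ θ : ℝ, 2 / (1 + b * Real.cos (π * θ) ^ 2) = 2 * (1 / (1 + b * Real.cos (π * θ) ^ 2)) := by
      intro θ; ring
    have hsqrtE : 0 < Real.sqrt (1 + E) := Real.sqrt_pos.2 (by linarith)
    have hsE : Real.sqrt (1 + E) ^ 2 = 1 + E := Real.sq_sqrt (by linarith)
    rcases le_or_gt E 1 with hE1 | hE1
    · -- small E
      have hIle : (∫ θ in (0:ℝ)..(1/2), 2 / (1 + b * Real.cos (π * θ) ^ 2)) ≤ 1 := by
        have := intervalIntegral.integral_mono_on (a := (0:ℝ)) (b := 1/2) (by norm_num)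
          (hgcont.intervalIntegrable 0 (1/2))
          (intervalIntegrable_const : IntervalIntegrable (fun _ => (2:ℝ)) MeasureTheory.volume 0 (1/2))
          (fun θ _ => by
            have : (1:ℝ) ≤ 1 + b * Real.cos (π * θ) ^ 2 := by
              nlinarith [mul_nonneg hb0 (sq_nonneg (Real.cos (π * θ)))]
            rw [div_le_iff₀ (by positivity)]; nlinarith)
        simpa using this
      have hs2 : Real.sqrt (1 + E) ≤ 2 := by nlinarith [hsqrtE.le]
      have hI0 : (0:ℝ) ≤ ∫ θ in (0:ℝ)..(1/2), 2 / (1 + b * Real.cos (π * θ) ^ 2) := by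
        apply intervalIntegral.integral_nonneg (by norm_num)
        intro θ _; positivity
      rw [le_div_iff₀ hsqrtE]
      nlinarith
    · -- large E
      have hb : 0 < b := by rw [hb_def]; nlinarith
      have hkey : (∫ θ in (0:ℝ)..(1/2), 2 / (1 + b * Real.cos (π * θ) ^ 2))
          ≤ 2 * (π / (4 * Real.sqrt b)) := by
        have h := key_int hb
        calc (∫ θ in (0:ℝ)..(1/2), 2 / (1 + b * Real.cos (π * θ) ^ 2))
            = 2 * ∫ θ in (0:ℝ)..(1/2), 1 / (1 + b * Real.cos (π * θ) ^ 2) := by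
              rw [← intervalIntegral.integral_const_mul]; congr 1; ext θ; ring
          _ ≤ 2 * (π / (4 * Real.sqrt b)) := by linarith
      have hsb : 0 < Real.sqrt b := Real.sqrt_pos.2 hb
      have hsb2 : Real.sqrt b ^ 2 = b := Real.sq_sqrt hb.le
      -- (1+E)/16 ≤ b
      have hble : (1 + E) / 16 ≤ b := by rw [hb_def]; nlinarith
      have hchain : 2 * (∫ θ in (0:ℝ)..(1/2), 2 / (1 + b * Real.cos (π * θ) ^ 2))
          ≤ π / Real.sqrt b := by
        calc 2 * (∫ θ in (0:ℝ)..(1/2), 2 / (1 + b * Real.cos (π * θ) ^ 2))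
            ≤ 2 * (2 * (π / (4 * Real.sqrt b))) := by linarith
          _ = π / Real.sqrt b := by field_simp; ring
      refine hchain.trans ?_
      have hst : Real.sqrt (1 + E) ≤ 4 * Real.sqrt b := by
        have h16 : Real.sqrt (1 + E) ≤ Real.sqrt (16 * b) :=
          Real.sqrt_le_sqrt (by linarith)
        rwa [show (16:ℝ) * b = 4 ^ 2 * b by norm_num,
          Real.sqrt_mul (by positivity), Real.sqrt_sq (by norm_num)] at h16
      rw [div_le_div_iff₀ hsb hsqrtE]
      nlinarith [mul_le_mul_of_nonneg_left hst Real.pi_pos.le, hsb.le]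
  -- assemble
  calc (∫ θ in (-(1/2):ℝ)..(1/2),
        (1 + c * E * Real.cos (π * θ) ^ 2 + c * F) *
          Real.exp (-(c * E * Real.cos (π * θ) ^ 2) - c * F))
      ≤ K * ∫ θ in (-(1/2):ℝ)..(1/2), 2 / (1 + b * Real.cos (π * θ) ^ 2) := I1
    _ ≤ K * (30 / Real.sqrt (1 + E)) := mul_le_mul_of_nonneg_left I2 hK0
    _ = 30 * (1 + F) * Real.exp (-c * F) / Real.sqrt (1 + E) := by
        rw [hK_def, neg_mul]; ring
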